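/- Let n ≥ 2, let a = (a_1,…,a_n) be a tuple of integers with each a_i ≥ 2, and for k = 1,…,n set q_k := μ(a_{k+1},…,a_n)·d(a_1,…,a_{k−1}) (with μ of the empty tuple equal to 1 and d of the empty tuple equal to 1). Then for every t ∈ ℂ with t ≠ 0, every ξ ∈ ℂ with ξ^{a_1 μ(a)} = t, and every (z_1,…,z_n) ∈ ℂ^n, one has g_a^{t,0}(z_1,…,z_n) = ξ^{−d(a)} · g_a(ξ^{μ(a)+q_1} z_1, ξ^{q_2} z_2, …, ξ^{q_n} z_n), where g_a := g_a^{1,0}. -/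

import Mathlib

open scoped BigOperators

/-- The signed chain polynomial (0-based indices). -/
noncomputable def chainP (n : ℕ) (a : ℕ → ℕ) (z : ℕ → ℂ) : ℂ :=
  (∑ k ∈ Finset.range (n - 1), (-1 : ℂ) ^ (k + 1) * z k ^ a k * z (k + 1))
    + (-1 : ℂ) ^ n * z (n - 1) ^ a (n - 1)

/-- The Milnor number `μ(a)` (0-based). -/
def muZ (n : ℕ) (a : ℕ → ℕ) : ℤ :=
  ∑ k ∈ Finset.range (n + 1), (-1 : ℤ) ^ k * ∏ i ∈ Finset.Ico k n, (a i : ℤ)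

/-- `d(a) = a_1 ⋯ a_n` (0-based). -/
def dd (n : ℕ) (a : ℕ → ℕ) : ℕ := ∏ i ∈ Finset.range n, a i

/-- The weight `q_k = μ(a_{k+1},…,a_n) · d(a_1,…,a_{k−1})` (0-based `k`). -/
def qWeight (n : ℕ) (a : ℕ → ℕ) (k : ℕ) : ℤ :=
  muZ (n - (k + 1)) (fun i => a (k + 1 + i)) * (dd k a : ℤ)

/-- `g_a^{t,s}(z) = z_1 − s z_2 − t z_1^{a_1} z_2 − p_{−a}(z_2,…,z_n)` (0-based). -/
noncomputable def gMap (n : ℕ) (a : ℕ → ℕ) (t s : ℂ) (z : ℕ → ℂ) : ℂ :=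
  z 0 - s * z 1 - t * z 0 ^ a 0 * z 1
    - chainP (n - 1) (fun i => a (i + 1)) (fun i => z (i + 1))

lemma muZ_zero' (b : ℕ → ℕ) : muZ 0 b = 1 := by simp [muZ]

lemma muZ_succ' (m : ℕ) (b : ℕ → ℕ) :
    muZ (m+1) b = (∏ i ∈ Finset.range (m+1), (b i : ℤ)) - muZ m (fun i => b (i+1)) := by
  unfold muZ
  rw [Finset.sum_range_succ']
  have h1 : ∀ k, ∏ i ∈ Finset.Ico (k+1) (m+1), (b i : ℤ)
      = ∏ i ∈ Finset.Ico k m, ((b (i+1) : ℕ) : ℤ) := by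
    intro k
    rw [Finset.prod_Ico_eq_prod_range, Finset.prod_Ico_eq_prod_range]
    rcases le_or_gt k m with h | h
    · rw [show m + 1 - (k+1) = m - k by omega]
      exact Finset.prod_congr rfl fun i _ => by rw [show k+1+i = k+i+1 by omega]
    · simp [show m + 1 - (k+1) = 0 by omega, show m - k = 0 by omega]
  simp only [h1]
  have h2 : ∀ x ∈ Finset.range (m+1), (-1:ℤ)^(x+1) * ∏ i ∈ Finset.Ico x m, ((b (i+1):ℕ) : ℤ)
      = -((-1:ℤ)^x * ∏ i ∈ Finset.Ico x m, ((b (i+1):ℕ) : ℤ)) := fun x _ => by ring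
  rw [Finset.sum_congr rfl h2, Finset.sum_neg_distrib, ← Finset.range_eq_Ico]
  ring

lemma muZ_bounds' : ∀ (m : ℕ) (b : ℕ → ℕ), (∀ i < m, 2 ≤ b i) →
    1 ≤ muZ m b ∧ muZ m b ≤ ∏ i ∈ Finset.range m, (b i : ℤ) := by
  intro m
  induction m with
  | zero => intro b _; simp [muZ_zero']
  | succ m ih =>
    intro b hb
    obtain ⟨h1, h2⟩ := ih (fun i => b (i+1)) (fun i hi => hb (i+1) (by omega))
    rw [muZ_succ', Finset.prod_range_succ']
    have hb0 : (2:ℤ) ≤ (b 0 : ℤ) := by exact_mod_cast hb 0 (by omega)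
    exact ⟨by nlinarith, by nlinarith⟩

lemma qWeight_step' (n : ℕ) (a : ℕ → ℕ) (k : ℕ) (hk : k + 1 < n) :
    (a k : ℤ) * qWeight n a k + qWeight n a (k+1) = (dd n a : ℤ) := by
  obtain ⟨m, rfl⟩ : ∃ m, n = k + 2 + m := ⟨n - (k+2), by omega⟩
  unfold qWeight
  rw [show k + 2 + m - (k+1) = m + 1 by omega, show k + 2 + m - (k+1+1) = m by omega,
    muZ_succ']
  have hf : (fun i => (fun j => a (k+1+j)) (i+1)) = fun i => a (k+1+1+i) :=
    funext fun i => by simp only []; rw [show k+1+(i+1) = k+1+1+i by omega]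
  rw [hf]
  have hdd1 : (dd (k+1) a : ℤ) = (dd k a : ℤ) * (a k : ℤ) := by
    unfold dd; rw [Finset.prod_range_succ]; push_cast; ring
  have hdd2 : (dd (k+2+m) a : ℤ)
      = (dd (k+1) a : ℤ) * ∏ i ∈ Finset.range (m+1), (a (k+1+i) : ℤ) := by
    unfold dd
    rw [show k+2+m = (k+1) + (m+1) by omega, Finset.prod_range_add]
    push_cast; ring
  rw [hdd2, hdd1]
  ring

lemma qWeight_zero' (n : ℕ) (a : ℕ → ℕ) (hn : 1 ≤ n) :
    muZ n a + qWeight n a 0 = (dd n a : ℤ) := by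
  obtain ⟨m, rfl⟩ : ∃ m, n = m + 1 := ⟨n - 1, by omega⟩
  unfold qWeight
  rw [show m + 1 - (0+1) = m by omega, muZ_succ']
  have hf : (fun i => a (0+1+i)) = fun i => a (i+1) :=
    funext fun i => by rw [show 0+1+i = i+1 by omega]
  rw [hf, show (dd 0 a : ℤ) = 1 by simp [dd]]
  unfold dd
  push_cast
  ring

lemma qWeight_last' (n : ℕ) (a : ℕ → ℕ) (hn : 1 ≤ n) :
    (a (n-1) : ℤ) * qWeight n a (n-1) = (dd n a : ℤ) := by
  obtain ⟨m, rfl⟩ : ∃ m, n = m + 1 := ⟨n - 1, by omega⟩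
  unfold qWeight
  simp only [Nat.add_sub_cancel]
  rw [show m + 1 - (m+1) = 0 by omega, muZ_zero']
  unfold dd
  rw [Finset.prod_range_succ]
  push_cast
  ring

/-- For `t ≠ 0` and `ξ` with `ξ^{a_1 μ(a)} = t`,
`g_a^{t,0}(z) = ξ^{−d(a)} g_a(ξ^{μ(a)+q_1} z_1, ξ^{q_2} z_2, …, ξ^{q_n} z_n)`
where `g_a = g_a^{1,0}`. -/
theorem stmt_8 (n : ℕ) (hn : 2 ≤ n) (a : ℕ → ℕ) (ha : ∀ i < n, 2 ≤ a i)
    (t : ℂ) (ht : t ≠ 0) (ξ : ℂ) (hξ : ξ ^ ((a 0 : ℤ) * muZ n a) = t)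
    (z : ℕ → ℂ) :
    gMap n a t 0 z
      = ξ ^ (-(dd n a : ℤ))
          * gMap n a 1 0
              (fun i => ξ ^ (if i = 0 then muZ n a + qWeight n a 0 else qWeight n a i)
                * z i) := by
  obtain ⟨m, rfl⟩ : ∃ m, n = m + 2 := ⟨n - 2, by omega⟩
  have hμ : 1 ≤ muZ (m+2) a := (muZ_bounds' (m+2) a ha).1
  have ha0 : 2 ≤ a 0 := ha 0 (by omega)
  have hξ0 : ξ ≠ 0 := by
    rintro rfl
    apply ht
    rw [← hξ]
    refine zero_zpow _ ?_
    have h1 : (0:ℤ) < (a 0 : ℤ) := by exact_mod_cast (by omega : 0 < a 0)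
    have := mul_pos h1 (show (0:ℤ) < muZ (m+2) a by omega)
    omega
  have key : ∀ (e e' : ℤ) (p : ℕ) (u v : ℂ),
      ξ ^ (-(dd (m+2) a : ℤ)) * ((ξ^e*u)^p * (ξ^e'*v))
        = ξ ^ (e*p + e' - (dd (m+2) a : ℤ)) * (u^p * v) := by
    intro e e' p u v
    rw [mul_pow, ← zpow_natCast (ξ^e) p, ← zpow_mul]
    rw [show ξ ^ (-(dd (m+2) a : ℤ)) * (ξ^(e*p) * u^p * (ξ^e' * v))
        = ξ^(-(dd (m+2) a : ℤ)) * ξ^(e*(p:ℤ)) * ξ^e' * (u^p*v) from by ring]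
    rw [← zpow_add₀ hξ0, ← zpow_add₀ hξ0]
    congr 1
    ring
  have hq0 := qWeight_zero' (m+2) a (by omega)
  have hlast := qWeight_last' (m+2) a (by omega)
  simp only [show m + 2 - 1 = m + 1 by omega] at hlast
  simp only [gMap, chainP, show m + 2 - 1 = m + 1 from rfl, Nat.add_sub_cancel,
    Nat.succ_ne_zero, if_false, if_pos rfl, reduceIte]
  rw [mul_sub, mul_sub, mul_sub, mul_add, Finset.mul_sum]
  congr 1
  · congr 1
    · congr 1
      · rw [← mul_assoc, ← zpow_add₀ hξ0,
          show -(dd (m+2) a : ℤ) + (muZ (m+2) a + qWeight (m+2) a 0) = 0 from by linarith,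
          zpow_zero, one_mul]
      · ring
    · rw [one_mul, key,
        show (muZ (m+2) a + qWeight (m+2) a 0) * (a 0 : ℤ) + qWeight (m+2) a 1
            - (dd (m+2) a : ℤ) = (a 0 : ℤ) * muZ (m+2) a from by
          linear_combination qWeight_step' (m+2) a 0 (by omega),
        hξ]
      ring
  · congr 1
    · refine Finset.sum_congr rfl fun k hk => ?_
      have hkm : k < m := Finset.mem_range.mp hk
      rw [show ξ ^ (-(dd (m+2) a : ℤ)) *
            ((-1:ℂ)^(k+1) * (ξ ^ qWeight (m+2) a (k+1) * z (k+1)) ^ a (k+1) *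
              (ξ ^ qWeight (m+2) a (k+1+1) * z (k+1+1)))
          = (-1:ℂ)^(k+1) * (ξ ^ (-(dd (m+2) a : ℤ)) *
              ((ξ ^ qWeight (m+2) a (k+1) * z (k+1)) ^ a (k+1) *
                (ξ ^ qWeight (m+2) a (k+1+1) * z (k+1+1)))) from by ring,
        key,
        show qWeight (m+2) a (k+1) * (a (k+1) : ℤ) + qWeight (m+2) a (k+1+1)
            - (dd (m+2) a : ℤ) = 0 from by
          linear_combination qWeight_step' (m+2) a (k+1) (by omega),
        zpow_zero, one_mul]
      ring
    · have hlastpow : (ξ ^ qWeight (m+2) a (m+1)) ^ (a (m+1))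
          = ξ ^ ((dd (m+2) a : ℤ)) := by
        rw [← zpow_natCast (ξ ^ qWeight (m+2) a (m+1)), ← zpow_mul,
          show qWeight (m+2) a (m+1) * (a (m+1) : ℤ) = (dd (m+2) a : ℤ) from by
            linear_combination hlast]
      rw [mul_pow, hlastpow,
        show ξ ^ (-(dd (m+2) a : ℤ)) *
            ((-1:ℂ)^(m+1) * (ξ ^ ((dd (m+2) a : ℤ)) * z (m+1) ^ a (m+1)))
          = (ξ ^ (-(dd (m+2) a : ℤ)) * ξ ^ ((dd (m+2) a : ℤ)))
              * ((-1:ℂ)^(m+1) * z (m+1) ^ a (m+1)) from by ring,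
        ← zpow_add₀ hξ0, neg_add_cancel, zpow_zero, one_mul]
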